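/- The Gauss curvature of the minimal surface given by Weierstrass data g = e^{ih_a}, φ = dz satisfies K_a(z) = −|z² + a²|^{−2}/cosh⁴(v_a(z)), where v_a = Im h_a. In particular |K_a|(0) = a^{−4}, which tends to ∞ as a → 0. -/

import Mathlib

/-- The domain `Ω_a = {x + iy : |x| ≤ 1/2, |y| ≤ (x² + a²)^{3/4}/2}`. -/
def OmegaA (a : ℝ) : Set ℂ :=
  {z | |z.re| ≤ 1 / 2 ∧ |z.im| ≤ (z.re ^ 2 + a ^ 2) ^ ((3 : ℝ) / 4) / 2}

/-- Key algebraic identity for the curvature computation. -/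
lemma key14 (E r : ℝ) (hE : 0 < E) :
    -(4 * (E⁻¹ * r⁻¹) * E⁻¹ / (1 + (E⁻¹) ^ 2) ^ 2) ^ 2
      = -((r ^ 2)⁻¹ / ((E + E⁻¹) / 2) ^ 4) := by
  have hE0 : E ≠ 0 := hE.ne'
  have h1 : (1 + (E⁻¹) ^ 2) ≠ 0 := by positivity
  have h2 : E + E⁻¹ ≠ 0 := by positivity
  rcases eq_or_ne r 0 with hr | hr
  · simp [hr]
  · field_simp
    ring

/-- The Gauss curvature `K = −(4|∂_z g||g|/(|φ|(1+|g|²)²))²` of the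
Weierstrass data `g = e^{ih_a}`, `φ = dz` satisfies
`K_a(z) = −|z² + a²|^{−2}/cosh⁴(v_a(z))` where `v_a = Im h_a`; in particular
`|K_a|(0) = a^{−4}`, which tends to `∞` as `a → 0⁺`. -/
theorem stmt_14 (a : ℝ) (ha : 0 < a) (ha2 : a < 1 / 2) (h : ℂ → ℂ)
    (hderiv : ∀ z ∈ OmegaA a, HasDerivAt h (1 / (z ^ 2 + (a : ℂ) ^ 2)) z)
    (h0 : h 0 = 0) :
    (∀ z ∈ OmegaA a, ∀ g' : ℂ,
        HasDerivAt (fun w => Complex.exp (Complex.I * h w)) g' z →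
        -(4 * ‖g'‖ * ‖Complex.exp (Complex.I * h z)‖ /
              ((1 + ‖Complex.exp (Complex.I * h z)‖ ^ 2) ^ 2)) ^ 2
          = -((‖z ^ 2 + (a : ℂ) ^ 2‖ ^ 2)⁻¹ / Real.cosh ((h z).im) ^ 4)) ∧
    (‖((0 : ℂ)) ^ 2 + (a : ℂ) ^ 2‖ ^ 2)⁻¹ / Real.cosh ((h 0).im) ^ 4
        = (a ^ 4)⁻¹ ∧
    Filter.Tendsto (fun t : ℝ => (t ^ 4)⁻¹) (nhdsWithin 0 (Set.Ioi 0)) Filter.atTop := by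
  refine ⟨?_, ?_, ?_⟩
  · intro z hz g' hg'
    have hd : HasDerivAt (fun w => Complex.exp (Complex.I * h w))
        (Complex.exp (Complex.I * h z) * (Complex.I * (1 / (z ^ 2 + (a : ℂ) ^ 2)))) z :=
      ((hderiv z hz).const_mul Complex.I).cexp
    have hgeq : g' = Complex.exp (Complex.I * h z) * (Complex.I * (1 / (z ^ 2 + (a : ℂ) ^ 2))) :=
      hg'.unique hd
    subst hgeq
    have habs : ‖Complex.exp (Complex.I * h z)‖ = (Real.exp ((h z).im))⁻¹ := by
      rw [Complex.norm_exp, ← Real.exp_neg]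
      congr 1
      simp [Complex.mul_re]
    rw [Real.cosh_eq, Real.exp_neg]
    simp only [norm_mul, Complex.norm_I, one_mul, one_div, norm_inv, habs]
    have := key14 (Real.exp ((h z).im)) ‖z ^ 2 + (a : ℂ) ^ 2‖ (Real.exp_pos _)
    linarith [this]
  · simp only [h0, Complex.zero_im, Real.cosh_zero, one_pow, div_one]
    norm_num
    ring
  · have h4 : Filter.Tendsto (fun t : ℝ => t ^ 4) (nhdsWithin 0 (Set.Ioi 0))
        (nhdsWithin 0 (Set.Ioi 0)) := by
      apply tendsto_nhdsWithin_of_tendsto_nhds_of_eventually_within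
      · have : Filter.Tendsto (fun t : ℝ => t ^ 4) (nhds 0) (nhds 0) := by
          simpa using (continuous_pow 4).tendsto (0 : ℝ)
        exact this.mono_left nhdsWithin_le_nhds
      · filter_upwards [self_mem_nhdsWithin] with t ht
        exact pow_pos (Set.mem_Ioi.mp ht) 4
    exact tendsto_inv_nhdsGT_zero.comp h4
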